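/- Let A be a C*-algebra, let a ∈ A with a ≥ 0 and let b ∈ A be self-adjoint. Then ‖a ∘ b‖² ≤ ‖a‖ · ‖b a b‖, where a ∘ b = (ab + ba)/2. -/

import Mathlib

theorem stmt_8 (A : Type*) [NonUnitalNormedRing A] [StarRing A] [CStarRing A]
    [NormedSpace ℂ A] [IsScalarTower ℂ A A] [SMulCommClass ℂ A A] [StarModule ℂ A]
    [CompleteSpace A] [PartialOrder A] [StarOrderedRing A]
    (a b : A) (ha : 0 ≤ a) (hb : IsSelfAdjoint b) :
    ‖(1/2 : ℂ) • (a * b + b * a)‖ ^ 2 ≤ ‖a‖ * ‖b * a * b‖ := by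
  letI : NonUnitalCStarAlgebra A := { }
  have has : IsSelfAdjoint a := ha.isSelfAdjoint
  set m := b * a * b with hm
  have hba : ‖b * a‖ = ‖a * b‖ := by
    rw [← norm_star (b * a), star_mul, has.star_eq, hb.star_eq]
  -- ‖a*b‖² ≤ ‖a‖ * ‖m‖ via the square root of a
  have hab2 : ‖a * b‖ ^ 2 ≤ ‖a‖ * ‖m‖ := by
    set c := CFC.sqrt a with hcdef
    have hc : 0 ≤ c := CFC.sqrt_nonneg a
    have hcc : c * c = a := CFC.sqrt_mul_sqrt_self a ha
    have hcs : IsSelfAdjoint c := hc.isSelfAdjoint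
    have hcb : ‖c * b‖ ^ 2 = ‖m‖ := by
      rw [sq, ← CStarRing.norm_star_mul_self (x := c * b), star_mul, hcs.star_eq,
        hb.star_eq, hm, ← hcc]
      congr 1
      noncomm_ring
    have hcn : ‖c‖ ^ 2 = ‖a‖ := by
      rw [sq, ← CStarRing.norm_star_mul_self (x := c), hcs.star_eq, hcc]
    have h1 : ‖a * b‖ ≤ ‖c‖ * ‖c * b‖ := by
      calc ‖a * b‖ = ‖c * (c * b)‖ := by rw [← mul_assoc, hcc]
        _ ≤ ‖c‖ * ‖c * b‖ := norm_mul_le _ _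
    calc ‖a * b‖ ^ 2 ≤ (‖c‖ * ‖c * b‖) ^ 2 :=
          pow_le_pow_left₀ (norm_nonneg _) h1 2
      _ = ‖c‖ ^ 2 * ‖c * b‖ ^ 2 := by ring
      _ = ‖a‖ * ‖m‖ := by rw [hcn, hcb]
  set x := a * b + b * a with hxdef
  have hxs : star x = x := by
    simp [hxdef, star_mul, has.star_eq, hb.star_eq, add_comm]
  have hnx : ‖x‖ ^ 2 = ‖x * x‖ := by
    rw [sq, ← CStarRing.norm_star_mul_self (x := x), hxs]
  have hexp : x * x = (a * m + m * a) + ((a * b) * (b * a) + (b * a) * (a * b)) := by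
    simp only [hxdef, hm]
    noncomm_ring
  have hbound : ‖x‖ ^ 2 ≤ 4 * (‖a‖ * ‖m‖) := by
    rw [hnx, hexp]
    have e1 : ‖a * m + m * a‖ ≤ ‖a‖ * ‖m‖ + ‖m‖ * ‖a‖ :=
      (norm_add_le _ _).trans (add_le_add (norm_mul_le _ _) (norm_mul_le _ _))
    have e2 : ‖(a * b) * (b * a) + (b * a) * (a * b)‖ ≤ ‖a * b‖ ^ 2 + ‖a * b‖ ^ 2 := by
      refine (norm_add_le _ _).trans (add_le_add ?_ ?_)
      · calc ‖(a * b) * (b * a)‖ ≤ ‖a * b‖ * ‖b * a‖ := norm_mul_le _ _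
          _ = ‖a * b‖ ^ 2 := by rw [hba, sq]
      · calc ‖(b * a) * (a * b)‖ ≤ ‖b * a‖ * ‖a * b‖ := norm_mul_le _ _
          _ = ‖a * b‖ ^ 2 := by rw [hba, sq]
    calc ‖(a * m + m * a) + ((a * b) * (b * a) + (b * a) * (a * b))‖
        ≤ ‖a * m + m * a‖ + ‖(a * b) * (b * a) + (b * a) * (a * b)‖ := norm_add_le _ _
      _ ≤ (‖a‖ * ‖m‖ + ‖m‖ * ‖a‖) + (‖a * b‖ ^ 2 + ‖a * b‖ ^ 2) := add_le_add e1 e2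
      _ ≤ 4 * (‖a‖ * ‖m‖) := by nlinarith [hab2]
  have hsmul : ‖(1/2 : ℂ) • x‖ = (1/2 : ℝ) * ‖x‖ := by
    rw [norm_smul]
    norm_num
  rw [hsmul]
  nlinarith [hbound, norm_nonneg x]
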